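/- arXiv:2506.14007 — 4 statements merged into one kernel-verified Lean document; each statement's English description precedes it below -/
import Mathlib

section
/- Let K be a simplicial set and n ≥ 0. Then every equivalence class in S(K)_n has exactly one representative (σ, f) such that σ is a nondegenerate simplex of K and f is surjective. -/
open CategoryTheory Opposite Simplicial

universe u

/-- A pair `(σ, f)` representing an element of the symmetrization `S(K)_n`:
`σ` is an `m`-simplex of `K` for some object `⟨m⟩` of the simplex category and
`f : ⟨n⟩ → ⟨m⟩` is an arbitrary function. -/
structure SymPair (K : SSet.{u}) (n : ℕ) : Type u where
  d : SimplexCategory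
  σ : K.obj (op d)
  f : Fin (n + 1) → Fin (d.len + 1)

/-- The generating relation `(σ, g ∘ f) ∼ (g^*(σ), f)` for weakly increasing `g`. -/
inductive SymRel (K : SSet.{u}) (n : ℕ) : SymPair K n → SymPair K n → Prop where
  | mk {d e : SimplexCategory} (g : d ⟶ e) (σ : K.obj (op e))
      (f : Fin (n + 1) → Fin (d.len + 1)) :
      SymRel K n ⟨e, σ, g.toOrderHom ∘ f⟩ ⟨d, K.map g.op σ, f⟩

/-- `S(K)_n`, the set of `n`-simplices of the symmetrization of `K`: the quotient of
the set of pairs `(σ, f)` by the equivalence relation generated by `SymRel`. -/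
def SymK (K : SSet.{u}) (n : ℕ) : Type u := Quot (SymRel K n)

/-- A simplex `σ ∈ K_m` is nondegenerate if it is not of the form `s^*(τ)` for a
surjective weakly increasing `s : ⟨m⟩ → ⟨l⟩` with `l < m`. -/
def IsNondegenerateSimplex (K : SSet.{u}) {d : SimplexCategory}
    (σ : K.obj (op d)) : Prop :=
  ∀ e : SimplexCategory, e.len < d.len → ∀ s : d ⟶ e,
    Function.Surjective s.toOrderHom → ∀ τ : K.obj (op e), σ ≠ K.map s.op τ

open CategoryTheory.Limits

namespace Aux
variable {K : SSet.{u}}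

lemma map_map {a b c : SimplexCategory} (g : a ⟶ b) (h : b ⟶ c) (σ : K.obj (op c)) :
    K.map g.op (K.map h.op σ) = K.map (g ≫ h).op σ := by
  rw [op_comp, FunctorToTypes.map_comp_apply]

lemma map_id' {a : SimplexCategory} (σ : K.obj (op a)) : K.map (𝟙 a).op σ = σ := by
  rw [op_id, FunctorToTypes.map_id_apply]

/-- monotone sections of a surjective monotone map, with min/max bounds -/
lemma exists_sections {a b : SimplexCategory} (s : a ⟶ b)
    (hs : Function.Surjective s.toOrderHom) :
    ∃ t t' : b ⟶ a, t ≫ s = 𝟙 b ∧ t' ≫ s = 𝟙 b ∧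
      ∀ x, t.toOrderHom (s.toOrderHom x) ≤ x ∧ x ≤ t'.toOrderHom (s.toOrderHom x) := by
  have hne : ∀ j, (Finset.univ.filter (fun y => s.toOrderHom y = j)).Nonempty := by
    intro j
    obtain ⟨y, hy⟩ := hs j
    exact ⟨y, by simp [hy]⟩
  set F : Fin (b.len + 1) → Finset (Fin (a.len + 1)) :=
    fun j => Finset.univ.filter (fun y => s.toOrderHom y = j) with hF
  have memF : ∀ j y, y ∈ F j ↔ s.toOrderHom y = j := by intro j y; simp [hF]
  have hsec : ∀ j y, y ∈ F j → s.toOrderHom y = j := fun j y h => (memF j y).1 h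
  refine ⟨SimplexCategory.Hom.mk ⟨fun j => (F j).min' (hne j), ?_⟩,
    SimplexCategory.Hom.mk ⟨fun j => (F j).max' (hne j), ?_⟩, ?_, ?_, ?_⟩
  · intro j j' hjj'
    by_contra h
    push_neg at h
    have := s.toOrderHom.monotone h.le
    rw [hsec j' _ ((F j').min'_mem _), hsec j _ ((F j).min'_mem _)] at this
    have : j = j' := le_antisymm hjj' this
    subst this
    exact absurd rfl h.ne
  · intro j j' hjj'
    by_contra h
    push_neg at h
    have := s.toOrderHom.monotone h.le
    rw [hsec j' _ ((F j').max'_mem _), hsec j _ ((F j).max'_mem _)] at this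
    have : j = j' := le_antisymm hjj' this
    subst this
    exact absurd rfl h.ne
  · apply SimplexCategory.Hom.ext'
    apply OrderHom.ext
    funext j
    simp [SimplexCategory.comp_toOrderHom]
    exact hsec j _ ((F j).min'_mem (hne j))
  · apply SimplexCategory.Hom.ext'
    apply OrderHom.ext
    funext j
    simp [SimplexCategory.comp_toOrderHom]
    exact hsec j _ ((F j).max'_mem (hne j))
  · intro x
    constructor
    · exact Finset.min'_le _ _ ((memF _ x).2 rfl)
    · exact Finset.le_max' _ _ ((memF _ x).2 rfl)

end Aux
namespace Aux
variable {K : SSet.{u}}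

lemma injective_of_nondeg {a b : SimplexCategory} (g : a ⟶ b) (ρ : K.obj (op b))
    (hτ : IsNondegenerateSimplex K (K.map g.op ρ)) :
    Function.Injective g.toOrderHom := by
  have fac : factorThruImage g ≫ image.ι g = g := image.fac g
  have hesurj : Function.Surjective (factorThruImage g).toOrderHom :=
    SimplexCategory.epi_iff_surjective.mp inferInstance
  have hgeq : K.map g.op ρ =
      K.map (factorThruImage g).op (K.map (image.ι g).op ρ) := by
    rw [map_map, fac]
  by_cases h : (image g).len < a.len
  · exact absurd hgeq (hτ _ h _ hesurj _)
  · have hle : (image g).len ≤ a.len := SimplexCategory.len_le_of_epi (factorThruImage g)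
    have hcard : a.len = (image g).len := le_antisymm (not_lt.mp h) hle
    have hbij : Function.Bijective (factorThruImage g).toOrderHom := by
      rw [Fintype.bijective_iff_surjective_and_card]
      simp [hcard]
      exact hesurj
    have hinj : Function.Injective (image.ι g).toOrderHom :=
      SimplexCategory.mono_iff_injective.mp inferInstance
    have : g.toOrderHom = (image.ι g).toOrderHom.comp (factorThruImage g).toOrderHom := by
      rw [← SimplexCategory.comp_toOrderHom, fac]
    rw [this]
    exact hinj.comp hbij.1

lemma ez_len_eq {a b b' : SimplexCategory} (s : a ⟶ b) (s' : a ⟶ b')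
    (hs : Function.Surjective s.toOrderHom) (hs' : Function.Surjective s'.toOrderHom)
    (τ : K.obj (op b)) (τ' : K.obj (op b'))
    (hτ : IsNondegenerateSimplex K τ) (hτ' : IsNondegenerateSimplex K τ')
    (h : K.map s.op τ = K.map s'.op τ') : b.len ≤ b'.len := by
  obtain ⟨t, -, ht, -, -⟩ := exists_sections s hs
  have : τ = K.map (t ≫ s').op τ' := by
    rw [← map_map, ← h, map_map, ht, map_id']
  have hinj : Function.Injective (t ≫ s').toOrderHom :=
    injective_of_nondeg _ _ (this ▸ hτ)
  have := Fintype.card_le_of_injective _ hinj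
  simpa using this

lemma ez_unique {a b : SimplexCategory} (s s' : a ⟶ b)
    (hs : Function.Surjective s.toOrderHom) (hs' : Function.Surjective s'.toOrderHom)
    (τ τ' : K.obj (op b))
    (hτ : IsNondegenerateSimplex K τ) (hτ' : IsNondegenerateSimplex K τ')
    (h : K.map s.op τ = K.map s'.op τ') : s = s' ∧ τ = τ' := by
  have key : ∀ t : b ⟶ a, t ≫ s = 𝟙 b → t ≫ s' = 𝟙 b ∧ τ = τ' := by
    intro t ht
    have heq : τ = K.map (t ≫ s').op τ' := by
      rw [← map_map, ← h, map_map, ht, map_id']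
    have hinj : Function.Injective (t ≫ s').toOrderHom :=
      injective_of_nondeg _ _ (heq ▸ hτ)
    have : Mono (t ≫ s') := SimplexCategory.mono_iff_injective.mpr hinj
    have hid : t ≫ s' = 𝟙 b := SimplexCategory.eq_id_of_mono _
    exact ⟨hid, by rw [heq, hid, map_id']⟩
  obtain ⟨t, t', ht, ht', hbound⟩ := exists_sections s hs
  refine ⟨?_, (key t ht).2⟩
  have h1 := (key t ht).1
  have h2 := (key t' ht').1
  apply SimplexCategory.Hom.ext'
  apply OrderHom.ext
  funext x
  have e1 : ∀ j, s'.toOrderHom (t.toOrderHom j) = j := by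
    intro j
    have := congrArg (fun φ => SimplexCategory.Hom.toOrderHom φ j) h1
    simpa [SimplexCategory.comp_toOrderHom] using this
  have e2 : ∀ j, s'.toOrderHom (t'.toOrderHom j) = j := by
    intro j
    have := congrArg (fun φ => SimplexCategory.Hom.toOrderHom φ j) h2
    simpa [SimplexCategory.comp_toOrderHom] using this
  obtain ⟨hb1, hb2⟩ := hbound x
  have l1 : s.toOrderHom x ≤ s'.toOrderHom x := by
    calc s.toOrderHom x = s'.toOrderHom (t.toOrderHom (s.toOrderHom x)) := (e1 _).symm
    _ ≤ s'.toOrderHom x := s'.toOrderHom.monotone hb1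
  have l2 : s'.toOrderHom x ≤ s.toOrderHom x := by
    calc s'.toOrderHom x ≤ s'.toOrderHom (t'.toOrderHom (s.toOrderHom x)) :=
          s'.toOrderHom.monotone hb2
    _ = s.toOrderHom x := e2 _
  exact le_antisymm l1 l2

end Aux
namespace Aux
variable {K : SSet.{u}}

lemma ez_exists {a : SimplexCategory} (σ : K.obj (op a)) :
    ∃ (b : SimplexCategory) (s : a ⟶ b) (τ : K.obj (op b)),
      Function.Surjective s.toOrderHom ∧ IsNondegenerateSimplex K τ ∧
        σ = K.map s.op τ := by
  suffices h : ∀ (N : ℕ) (a : SimplexCategory), a.len ≤ N → ∀ σ : K.obj (op a),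
      ∃ (b : SimplexCategory) (s : a ⟶ b) (τ : K.obj (op b)),
        Function.Surjective s.toOrderHom ∧ IsNondegenerateSimplex K τ ∧
          σ = K.map s.op τ from h a.len a le_rfl σ
  intro N
  induction N with
  | zero =>
    intro a ha σ
    by_cases hnd : IsNondegenerateSimplex K σ
    · exact ⟨a, 𝟙 a, σ, fun x => ⟨x, rfl⟩, hnd, (map_id' σ).symm⟩
    · simp only [IsNondegenerateSimplex, not_forall, not_ne_iff] at hnd
      obtain ⟨e, he, -⟩ := hnd
      omega
  | succ N ih =>
    intro a ha σ
    by_cases hnd : IsNondegenerateSimplex K σ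
    · exact ⟨a, 𝟙 a, σ, fun x => ⟨x, rfl⟩, hnd, (map_id' σ).symm⟩
    · simp only [IsNondegenerateSimplex, not_forall, not_ne_iff] at hnd
      obtain ⟨e, he, s, hsurj, τ, hτ⟩ := hnd
      obtain ⟨b, s', τ', hs', hnd', heq⟩ := ih e (by omega) τ
      refine ⟨b, s ≫ s', τ', ?_, hnd', ?_⟩
      · rw [SimplexCategory.comp_toOrderHom]
        exact hs'.comp hsurj
      · rw [hτ, heq, map_map]

lemma image_factor {m : ℕ} {a : SimplexCategory} (f : Fin (m + 1) → Fin (a.len + 1)) :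
    ∃ (b : SimplexCategory) (i : b ⟶ a) (f₁ : Fin (m + 1) → Fin (b.len + 1)),
      Function.Injective i.toOrderHom ∧ Function.Surjective f₁ ∧
        ⇑i.toOrderHom ∘ f₁ = f := by
  set S : Finset (Fin (a.len + 1)) := Finset.image f Finset.univ with hS
  have hSne : 0 < S.card := Finset.card_pos.mpr ⟨f 0, by simp [hS]⟩
  set b : SimplexCategory := SimplexCategory.mk (S.card - 1) with hb
  have hcard : S.card = b.len + 1 := by simp [hb]; omega
  set ι := S.orderEmbOfFin hcard
  have hmem : ∀ x, f x ∈ S := fun x => by simp [hS]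
  have hrange : ∀ x, ∃ y, ι y = f x := by
    intro x
    have := S.range_orderEmbOfFin hcard
    have hx : f x ∈ Set.range ι := by rw [this]; exact_mod_cast hmem x
    exact hx
  choose f₁ hf₁ using hrange
  refine ⟨b, SimplexCategory.Hom.mk ⟨⇑ι, ι.monotone⟩, f₁, ?_, ?_, ?_⟩
  · simpa using ι.injective
  · intro y
    have : (ι y : Fin (a.len + 1)) ∈ S := S.orderEmbOfFin_mem hcard y
    rw [hS, Finset.mem_image] at this
    obtain ⟨x, -, hx⟩ := this
    exact ⟨x, ι.injective (by rw [hf₁ x, hx])⟩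
  · funext x
    simpa using hf₁ x

lemma image_factor_len {m : ℕ} {a b : SimplexCategory} (i : b ⟶ a)
    (f₁ : Fin (m + 1) → Fin (b.len + 1))
    (hi : Function.Injective i.toOrderHom) (hf₁ : Function.Surjective f₁) :
    (Finset.image (⇑i.toOrderHom ∘ f₁) Finset.univ).card = b.len + 1 := by
  rw [← Finset.image_image, Finset.image_univ_of_surjective hf₁,
    Finset.card_image_of_injective _ hi, Finset.card_univ, Fintype.card_fin]

lemma image_factor_unique {m : ℕ} {a b : SimplexCategory} (i i' : b ⟶ a)
    (f₁ f₁' : Fin (m + 1) → Fin (b.len + 1))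
    (hi : Function.Injective i.toOrderHom) (hi' : Function.Injective i'.toOrderHom)
    (hf₁ : Function.Surjective f₁) (hf₁' : Function.Surjective f₁')
    (heq : ⇑i.toOrderHom ∘ f₁ = ⇑i'.toOrderHom ∘ f₁') :
    i = i' ∧ f₁ = f₁' := by
  set S : Finset (Fin (a.len + 1)) := Finset.image (⇑i.toOrderHom ∘ f₁) Finset.univ with hS
  have hc : S.card = b.len + 1 := image_factor_len i f₁ hi hf₁
  have hmemi : ∀ x, i.toOrderHom x ∈ S := by
    rw [hS, ← Finset.image_image, Finset.image_univ_of_surjective hf₁]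
    intro x
    exact Finset.mem_image_of_mem _ (Finset.mem_univ x)
  have hmemi' : ∀ x, i'.toOrderHom x ∈ S := by
    rw [hS, heq, ← Finset.image_image, Finset.image_univ_of_surjective hf₁']
    intro x
    exact Finset.mem_image_of_mem _ (Finset.mem_univ x)
  have hieq : ⇑i.toOrderHom = ⇑i'.toOrderHom := by
    rw [Finset.orderEmbOfFin_unique hc hmemi
        (i.toOrderHom.monotone.strictMono_of_injective hi),
      Finset.orderEmbOfFin_unique hc hmemi'
        (i'.toOrderHom.monotone.strictMono_of_injective hi')]
  have hii' : i = i' := SimplexCategory.Hom.ext' _ _ (OrderHom.ext _ _ hieq)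
  refine ⟨hii', funext fun x => hi ?_⟩
  calc i.toOrderHom (f₁ x) = i'.toOrderHom (f₁' x) := congrFun heq x
  _ = i.toOrderHom (f₁' x) := by rw [hieq]

end Aux
namespace Aux
variable {K : SSet.{u}} {n : ℕ}

/-- `q` is the normal form of `p`. -/
def IsNorm (p q : SymPair K n) : Prop :=
  IsNondegenerateSimplex K q.σ ∧ ∃ (c : SimplexCategory) (i : c ⟶ p.d) (s : c ⟶ q.d)
    (f₁ : Fin (n + 1) → Fin (c.len + 1)),
    Function.Injective i.toOrderHom ∧ Function.Surjective s.toOrderHom ∧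
    Function.Surjective f₁ ∧
    K.map i.op p.σ = K.map s.op q.σ ∧
    p.f = ⇑i.toOrderHom ∘ f₁ ∧ q.f = ⇑s.toOrderHom ∘ f₁

lemma IsNorm.surj {p q : SymPair K n} (h : IsNorm p q) : Function.Surjective q.f := by
  obtain ⟨-, c, i, s, f₁, -, hs, hf₁, -, -, hqf⟩ := h
  rw [hqf]
  exact hs.comp hf₁

lemma isNorm_exists (p : SymPair K n) : ∃ q, IsNorm p q := by
  obtain ⟨c, i, f₁, hi, hf₁, hfac⟩ := image_factor p.f
  obtain ⟨b, s, τ, hs, hτ, heq⟩ := ez_exists (K.map i.op p.σ)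
  exact ⟨⟨b, τ, ⇑s.toOrderHom ∘ f₁⟩, hτ, c, i, s, f₁, hi, hs, hf₁, heq, hfac.symm, rfl⟩

lemma isNorm_unique {p q q' : SymPair K n} (h : IsNorm p q) (h' : IsNorm p q') : q = q' := by
  obtain ⟨d, σ, f⟩ := p
  obtain ⟨e, τ, r⟩ := q
  obtain ⟨e', τ', r'⟩ := q'
  obtain ⟨hτ, c, i, s, f₁, hi, hs, hf₁, heq, hpf, hqf⟩ := h
  obtain ⟨hτ', c', i', s', f₁', hi', hs', hf₁', heq', hpf', hqf'⟩ := h'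
  -- identify the image factorizations
  have hceq : c = c' := by
    apply SimplexCategory.ext
    have h1 := image_factor_len i f₁ hi hf₁
    have h2 := image_factor_len i' f₁' hi' hf₁'
    rw [← hpf] at h1
    rw [← hpf'] at h2
    omega
  subst hceq
  obtain ⟨rfl, rfl⟩ := image_factor_unique i i' f₁ f₁' hi hi' hf₁ hf₁' (hpf.symm.trans hpf')
  -- identify the EZ decompositions
  have hlen : e = e' := by
    apply SimplexCategory.ext
    exact le_antisymm (ez_len_eq s s' hs hs' τ τ' hτ hτ' (heq.symm.trans heq'))
      (ez_len_eq s' s hs' hs τ' τ hτ' hτ (heq'.symm.trans heq))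
  subst hlen
  obtain ⟨rfl, rfl⟩ := ez_unique s s' hs hs' τ τ' hτ hτ' (heq.symm.trans heq')
  rw [show r = r' from hqf.trans hqf'.symm]

lemma isNorm_self {q : SymPair K n} (hnd : IsNondegenerateSimplex K q.σ)
    (hsurj : Function.Surjective q.f) : IsNorm q q := by
  refine ⟨hnd, q.d, 𝟙 q.d, 𝟙 q.d, q.f, ?_, ?_, hsurj, rfl, ?_, ?_⟩ <;>
    simp [SimplexCategory.id_toOrderHom]
  · exact fun x y h => h
  · exact fun x => ⟨x, rfl⟩

lemma isNorm_quot {p q : SymPair K n} (h : IsNorm p q) :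
    Quot.mk (SymRel K n) p = Quot.mk (SymRel K n) q := by
  obtain ⟨d, σ, f⟩ := p
  obtain ⟨e, τ, r⟩ := q
  obtain ⟨hτ, c, i, s, f₁, hi, hs, hf₁, heq, hpf, hqf⟩ := h
  have hpf' : f = ⇑i.toOrderHom ∘ f₁ := hpf
  have hqf' : r = ⇑s.toOrderHom ∘ f₁ := hqf
  have heq' : K.map i.op σ = K.map s.op τ := heq
  have h1 : Quot.mk (SymRel K n) ⟨d, σ, ⇑i.toOrderHom ∘ f₁⟩ =
      Quot.mk (SymRel K n) ⟨c, K.map i.op σ, f₁⟩ := Quot.sound (SymRel.mk i σ f₁)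
  have h2 : Quot.mk (SymRel K n) ⟨e, τ, ⇑s.toOrderHom ∘ f₁⟩ =
      Quot.mk (SymRel K n) ⟨c, K.map s.op τ, f₁⟩ := Quot.sound (SymRel.mk s τ f₁)
  rw [hpf', hqf', h1, h2, heq']

end Aux
namespace Aux
variable {K : SSet.{u}} {n : ℕ}

lemma isNorm_of_rel {p p' q : SymPair K n} (hrel : SymRel K n p p') (h : IsNorm p' q) :
    IsNorm p q := by
  cases hrel with
  | @mk d e g σ f =>
  obtain ⟨b, τ, r⟩ := q
  obtain ⟨hτ, c, i, s, f₁, hi, hs, hf₁, heq, hpf, hqf⟩ := h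
  have hpf' : f = ⇑i.toOrderHom ∘ f₁ := hpf
  have hqf' : r = ⇑s.toOrderHom ∘ f₁ := hqf
  have heq' : K.map i.op (K.map g.op σ) = K.map s.op τ := heq
  set φ : c ⟶ e := i ≫ g with hφ
  have fac : factorThruImage φ ≫ image.ι φ = φ := image.fac φ
  set ρ : K.obj (op (image φ)) := K.map (image.ι φ).op σ with hρdef
  obtain ⟨k₀, u, τ₀, hu, hτ₀, hρ⟩ := ez_exists ρ
  have he₀ : Function.Surjective (factorThruImage φ).toOrderHom :=
    SimplexCategory.epi_iff_surjective.mp inferInstance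
  have key : K.map s.op τ = K.map (factorThruImage φ ≫ u).op τ₀ := by
    have : K.map (factorThruImage φ ≫ u).op τ₀ = K.map s.op τ := by
      rw [← map_map, ← hρ, hρdef, map_map, fac, hφ, ← map_map, heq']
    exact this.symm
  have hsu : Function.Surjective (factorThruImage φ ≫ u).toOrderHom := by
    rw [SimplexCategory.comp_toOrderHom]
    exact hu.comp he₀
  have hlen : k₀ = b := by
    apply SimplexCategory.ext
    exact le_antisymm
      (ez_len_eq (factorThruImage φ ≫ u) s hsu hs τ₀ τ hτ₀ hτ key.symm)
      (ez_len_eq s (factorThruImage φ ≫ u) hs hsu τ τ₀ hτ hτ₀ key)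
  subst hlen
  obtain ⟨hseq, rfl⟩ := ez_unique s (factorThruImage φ ≫ u) hs hsu τ τ₀ hτ hτ₀ key
  refine ⟨hτ, image φ, image.ι φ, u, ⇑(factorThruImage φ).toOrderHom ∘ f₁, ?_, hu,
    he₀.comp hf₁, hρ, ?_, ?_⟩
  · exact SimplexCategory.mono_iff_injective.mp inferInstance
  · show ⇑g.toOrderHom ∘ f = _
    funext x
    have h1 : f x = i.toOrderHom (f₁ x) := congrFun hpf' x
    have h2 : ∀ y, (image.ι φ).toOrderHom ((factorThruImage φ).toOrderHom y) =
        φ.toOrderHom y := by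
      intro y
      exact congrFun
        (congrArg (fun ψ : _ ⟶ _ => ⇑(SimplexCategory.Hom.toOrderHom ψ)) fac) y
    show g.toOrderHom (f x) =
      (image.ι φ).toOrderHom ((factorThruImage φ).toOrderHom (f₁ x))
    rw [h1, h2, hφ]
    rfl
  · show r = _
    rw [hqf', hseq, SimplexCategory.comp_toOrderHom]
    rfl

lemma isNorm_iff_of_eqvGen {p p' : SymPair K n} (h : Relation.EqvGen (SymRel K n) p p') :
    ∀ q, IsNorm p q ↔ IsNorm p' q := by
  have rev : ∀ {a b q : SymPair K n}, SymRel K n a b → IsNorm a q → IsNorm b q := by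
    intro a b q hrel hq
    obtain ⟨q', hq'⟩ := isNorm_exists b
    have : IsNorm a q' := isNorm_of_rel hrel hq'
    rw [isNorm_unique hq this]
    exact hq'
  induction h with
  | rel a b hab => exact fun q => ⟨rev hab, isNorm_of_rel hab⟩
  | refl a => exact fun q => Iff.rfl
  | symm a b _ ih => exact fun q => (ih q).symm
  | trans a b c _ _ ih₁ ih₂ => exact fun q => (ih₁ q).trans (ih₂ q)

end Aux

theorem stmt2 (K : SSet.{u}) (n : ℕ) (x : SymK K n) :
    ∃! q : SymPair K n, (IsNondegenerateSimplex K q.σ ∧ Function.Surjective q.f) ∧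
      Quot.mk (SymRel K n) q = x := by
  obtain ⟨p, rfl⟩ := Quot.exists_rep x
  obtain ⟨q, hq⟩ := Aux.isNorm_exists p
  refine ⟨q, ⟨⟨hq.1, hq.surj⟩, (Aux.isNorm_quot hq).symm⟩, ?_⟩
  rintro q' ⟨⟨hnd', hsurj'⟩, hquot⟩
  have h1 : Aux.IsNorm q' q' := Aux.isNorm_self hnd' hsurj'
  have h2 : Relation.EqvGen (SymRel K n) p q' := Quot.eqvGen_exact hquot.symm
  have h3 : Aux.IsNorm p q' := (Aux.isNorm_iff_of_eqvGen h2 q').mpr h1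
  exact Aux.isNorm_unique h3 hq
end

section
/- Let n, l ≥ 0 and let f : ⟨n⟩ → ⟨l⟩ be an arbitrary function. Define the simplicial set C^f by letting C^f_m be the set of functions g : ⟨m⟩ → ⟨n⟩ such that f∘g is weakly increasing, with a weakly increasing u : ⟨p⟩ → ⟨m⟩ acting by g ↦ g∘u. Then the geometric realization |C^f| is a contractible topological space. -/
open CategoryTheory Simplicial

/-- The simplicial set `C^f` associated to an arbitrary function
`f : ⟨n⟩ → ⟨l⟩`: its `m`-simplices are the arbitrary functions
`g : ⟨m⟩ → ⟨n⟩` such that `f ∘ g` is weakly increasing, with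
weakly increasing maps acting by precomposition. -/
def Cf (n l : ℕ) (f : Fin (n + 1) → Fin (l + 1)) : SSet where
  obj X := { g : Fin (X.unop.len + 1) → Fin (n + 1) // Monotone (f ∘ g) }
  map u := TypeCat.ofHom fun g => ⟨g.1 ∘ u.unop.toOrderHom, g.2.comp u.unop.toOrderHom.monotone⟩

namespace Stmt3Aux

open Opposite SimplexCategory

abbrev SS (m : ℕ) := stdSimplex ℝ (Fin (m + 1))

noncomputable def conePtFun {m : ℕ} (x : Fin (m + 1) → ℝ) (t : unitInterval) :
    Fin (m + 2) → ℝ :=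
  Fin.cases (t : ℝ) (fun j => (1 - (t : ℝ)) * x j)

lemma continuous_conePtFun {m : ℕ} :
    Continuous fun q : (Fin (m + 1) → ℝ) × unitInterval => conePtFun q.1 q.2 := by
  apply continuous_pi
  intro i
  rcases Fin.eq_zero_or_eq_succ i with rfl | ⟨j, rfl⟩
  · exact (continuous_subtype_val.comp continuous_snd).congr fun q => by simp [conePtFun]
  · have h1 : Continuous fun q : (Fin (m + 1) → ℝ) × unitInterval =>
        (1 - (q.2 : ℝ)) * q.1 j :=
      ((continuous_const.sub (continuous_subtype_val.comp continuous_snd)).mul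
        ((continuous_apply j).comp continuous_fst))
    exact h1.congr fun q => by simp [conePtFun]

noncomputable def conePt {m : ℕ} (x : SS m) (t : unitInterval) : SS (m + 1) :=
  ⟨conePtFun x.1 t, by
    refine ⟨fun i => ?_, ?_⟩
    · rcases Fin.eq_zero_or_eq_succ i with rfl | ⟨j, rfl⟩
      · simp only [conePtFun, Fin.cases_zero]
        exact t.2.1
      · simp only [conePtFun, Fin.cases_succ]
        exact mul_nonneg (sub_nonneg.2 t.2.2) (x.2.1 j)
    · rw [Fin.sum_univ_succ]
      simp only [conePtFun, Fin.cases_zero, Fin.cases_succ]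
      rw [← Finset.mul_sum, x.2.2]
      ring⟩

lemma continuous_conePt {m : ℕ} :
    Continuous fun q : SS m × unitInterval => conePt q.1 q.2 :=
  (continuous_conePtFun.comp
    ((continuous_subtype_val.comp continuous_fst).prodMk continuous_snd)).subtype_mk _

lemma conePtFun_eq {m : ℕ} (x : Fin (m + 1) → ℝ) (t : unitInterval) :
    conePtFun x t = (t : ℝ) • Pi.single 0 1 + (1 - (t : ℝ)) • FunOnFinite.linearMap ℝ ℝ Fin.succ x := by
  funext i
  rcases Fin.eq_zero_or_eq_succ i with rfl | ⟨j, rfl⟩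
  · simp [conePtFun, FunOnFinite.linearMap_apply_apply, Fin.succ_ne_zero]
  · simp [conePtFun, FunOnFinite.linearMap_apply_apply, Fin.succ_ne_zero, Fin.succ_inj,
      Finset.filter_eq']

def coneFun {p m : ℕ} (u : Fin (p + 1) → Fin (m + 1)) : Fin (p + 2) → Fin (m + 2) :=
  Fin.cases 0 (Fin.succ ∘ u)

def coneHom {p m : ℕ} (u : (⦋p⦌ : SimplexCategory) ⟶ ⦋m⦌) :
    (⦋p + 1⦌ : SimplexCategory) ⟶ ⦋m + 1⦌ :=
  SimplexCategory.Hom.mk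
    ⟨coneFun u.toOrderHom, by
      intro i j hij
      rcases Fin.eq_zero_or_eq_succ i with rfl | ⟨i', rfl⟩
      · simp only [coneFun, Fin.cases_zero]
        exact Fin.zero_le _
      · rcases Fin.eq_zero_or_eq_succ j with rfl | ⟨j', rfl⟩
        · exact absurd (Fin.le_zero_iff.mp hij) (Fin.succ_ne_zero i')
        · simp only [coneFun, Fin.cases_succ, Function.comp_apply]
          exact Fin.succ_le_succ_iff.mpr (u.toOrderHom.monotone (Fin.succ_le_succ_iff.mp hij))⟩

lemma toTopMap_conePt {p m : ℕ} (u : Fin (p + 1) → Fin (m + 1)) (x : SS p)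
    (t : unitInterval) :
    stdSimplex.map (coneFun u) (conePt x t) = conePt (stdSimplex.map u x) t := by
  apply stdSimplex.ext
  rw [stdSimplex.map_coe]
  show FunOnFinite.linearMap ℝ ℝ (coneFun u) (conePtFun x.1 t) =
    conePtFun (FunOnFinite.linearMap ℝ ℝ u x.1) t
  rw [conePtFun_eq, conePtFun_eq, map_add, map_smul, map_smul,
    FunOnFinite.linearMap_piSingle, ← LinearMap.comp_apply, ← FunOnFinite.linearMap_comp,
    ← LinearMap.comp_apply, ← FunOnFinite.linearMap_comp]
  rfl

lemma conePt_zero {m : ℕ} (x : SS m) :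
    conePt x 0 = stdSimplex.map Fin.succ x := by
  apply stdSimplex.ext
  rw [stdSimplex.map_coe]
  show conePtFun x.1 0 = _
  rw [conePtFun_eq]
  simp
  rfl

lemma conePt_one {m : ℕ} (x : SS m) :
    conePt x 1 = stdSimplex.map (fun _ => (0 : Fin (m + 2))) x := by
  apply stdSimplex.ext
  rw [stdSimplex.map_coe]
  show conePtFun x.1 1 = _
  funext i
  rw [FunOnFinite.linearMap_apply_apply]
  rcases Fin.eq_zero_or_eq_succ i with rfl | ⟨k, rfl⟩
  · simp only [conePtFun, Fin.cases_zero]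
    rw [Finset.filter_true_of_mem (fun _ _ => trivial)]
    exact x.2.2.symm
  · simp [conePtFun, (Fin.succ_ne_zero k).symm]

lemma delta0_fun {m : ℕ} :
    ⇑(SimplexCategory.δ (0 : Fin (m + 2))).toOrderHom = Fin.succ := by
  funext j
  simp [SimplexCategory.δ, Fin.succAbove]

section
variable {n l : ℕ} {f : Fin (n + 1) → Fin (l + 1)} {a : Fin (n + 1)} (ha : ∀ x, f a ≤ f x)

def coneS {m : ℕ} (g : (Cf n l f).obj (op ⦋m⦌)) : (Cf n l f).obj (op ⦋m + 1⦌) :=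
  ⟨Fin.cases a g.1, by
    intro i j hij
    rcases Fin.eq_zero_or_eq_succ i with rfl | ⟨i', rfl⟩
    · simp only [Function.comp_apply, Fin.cases_zero]
      exact ha _
    · rcases Fin.eq_zero_or_eq_succ j with rfl | ⟨j', rfl⟩
      · exact absurd (Fin.le_zero_iff.mp hij) (Fin.succ_ne_zero i')
      · simp only [Function.comp_apply, Fin.cases_succ]
        exact g.2 (Fin.succ_le_succ_iff.mp hij)⟩

lemma map_coneHom {p m : ℕ} (u : (⦋p⦌ : SimplexCategory) ⟶ ⦋m⦌) (g : (Cf n l f).obj (op ⦋m⦌)) :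
    (Cf n l f).map (coneHom u).op (coneS ha g) = coneS ha ((Cf n l f).map u.op g) := by
  apply Subtype.ext
  funext i
  show (Fin.cases a g.1 : Fin (m + 2) → Fin (n + 1)) ((coneHom u).toOrderHom i) = Fin.cases a (g.1 ∘ u.toOrderHom) i
  rcases Fin.eq_zero_or_eq_succ i with rfl | ⟨i', rfl⟩ <;>
    rfl

lemma map_δ₀ {m : ℕ} (g : (Cf n l f).obj (op ⦋m⦌)) :
    (Cf n l f).map (SimplexCategory.δ (0 : Fin (m + 2))).op (coneS ha g) = g := by
  apply Subtype.ext
  funext i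
  show (Fin.cases a g.1 : Fin (m + 2) → Fin (n + 1)) ((SimplexCategory.δ 0).toOrderHom i) = g.1 i
  rw [delta0_fun]
  simp

def aZero : (Cf n l f).obj (op ⦋0⦌) := ⟨fun _ => a, fun _ _ _ => le_rfl⟩

lemma map_const {m : ℕ} (g : (Cf n l f).obj (op ⦋m⦌)) :
    (Cf n l f).map (SimplexCategory.const ⦋m⦌ ⦋m + 1⦌ 0).op (coneS ha g) =
      (Cf n l f).map (SimplexCategory.const ⦋m⦌ ⦋0⦌ 0).op (aZero (a := a)) := by
  apply Subtype.ext
  funext i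
  show (Fin.cases a g.1 : Fin (m + 2) → Fin (n + 1)) ((SimplexCategory.const ⦋m⦌ ⦋m+1⦌ 0).toOrderHom i) = _
  simp [SimplexCategory.const, aZero]
  rfl
end

noncomputable def ptMap (X : SSet) {m : SimplexCategoryᵒᵖ} (x : X.obj m) :
    SimplexCategory.toTop.obj m.unop ⟶ SSet.toTop.obj X :=
  ((sSetTopAdj.unit.app X).app m x).down

lemma homEquiv_app (X : SSet) (E : TopCat) (F : SSet.toTop.obj X ⟶ E) (m : SimplexCategoryᵒᵖ)
    (x : X.obj m) : ((sSetTopAdj.homEquiv X E F).app m x).down = ptMap X x ≫ F := by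
  rw [Adjunction.homEquiv_unit]
  rfl

lemma hom_ext {X : SSet} {E : TopCat} {F G : SSet.toTop.obj X ⟶ E}
    (h : ∀ (m : SimplexCategoryᵒᵖ) (x : X.obj m), ptMap X x ≫ F = ptMap X x ≫ G) :
    F = G := by
  apply (sSetTopAdj.homEquiv X E).injective
  ext m x
  apply ULift.ext
  exact (homEquiv_app X E F m x).trans ((h m x).trans (homEquiv_app X E G m x).symm)

lemma ptMap_comp (X : SSet) {p m : SimplexCategory} (u : p ⟶ m) (x : X.obj (op m)) :
    ptMap X (X.map u.op x) = SimplexCategory.toTop.map u ≫ ptMap X x := by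
  have h := ConcreteCategory.congr_hom ((sSetTopAdj.unit.app X).naturality u.op) x
  exact congrArg ULift.down h

section Phi
variable {n l : ℕ} {f : Fin (n + 1) → Fin (l + 1)} {a : Fin (n + 1)} (ha : ∀ x, f a ≤ f x)

noncomputable def Ksp (n l : ℕ) (f : Fin (n + 1) → Fin (l + 1)) : TopCat :=
  TopCat.of C(unitInterval, SSet.toTop.obj (Cf n l f))

noncomputable def PM {k : ℕ} (g : (Cf n l f).obj (op ⦋k⦌)) :
    C(ULift (SS k) × unitInterval, SSet.toTop.obj (Cf n l f)) :=
  ⟨fun q => (ptMap (Cf n l f) (coneS ha g)) (ULift.up (conePt q.1.down q.2)),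
    (ptMap (Cf n l f) (coneS ha g)).hom.continuous.comp
      (continuous_uliftUp.comp (continuous_conePt.comp
        ((continuous_uliftDown.comp continuous_fst).prodMk continuous_snd)))⟩

noncomputable def PhiMap {k : ℕ} (g : (Cf n l f).obj (op ⦋k⦌)) :
    SimplexCategory.toTop.obj ⦋k⦌ ⟶ Ksp n l f :=
  TopCat.ofHom (ContinuousMap.curry (PM ha g))

lemma PhiMap_natural {p k : ℕ} (u : (⦋p⦌ : SimplexCategory) ⟶ ⦋k⦌)
    (g : (Cf n l f).obj (op ⦋k⦌)) :
    PhiMap ha ((Cf n l f).map u.op g) = SimplexCategory.toTop.map u ≫ PhiMap ha g := by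
  apply TopCat.hom_ext
  refine ContinuousMap.ext fun q => ContinuousMap.ext fun t => ?_
  show PM ha ((Cf n l f).map u.op g) (q, t) = PM ha g (SimplexCategory.toTop.map u q, t)
  calc PM ha ((Cf n l f).map u.op g) (q, t)
      = (ptMap (Cf n l f) (coneS ha ((Cf n l f).map u.op g))) (ULift.up (conePt q.down t)) := rfl
    _ = (ptMap (Cf n l f) ((Cf n l f).map (coneHom u).op (coneS ha g)))
          (ULift.up (conePt q.down t)) := by
        rw [map_coneHom]
    _ = (ptMap (Cf n l f) (coneS ha g))
          (SimplexCategory.toTop.map (coneHom u) (ULift.up (conePt q.down t))) := by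
        rw [ptMap_comp]
        rfl
    _ = (ptMap (Cf n l f) (coneS ha g))
          (ULift.up (conePt (stdSimplex.map u.toOrderHom q.down) t)) := by
        congr 1
        exact congrArg ULift.up (toTopMap_conePt u.toOrderHom q.down t)
    _ = PM ha g (SimplexCategory.toTop.map u q, t) := rfl

noncomputable def Phi : Cf n l f ⟶ TopCat.toSSet.obj (Ksp n l f) where
  app m := TypeCat.ofHom fun g => ULift.up (PhiMap ha (k := m.unop.len) g)
  naturality := by
    intro m m' φ
    ext g
    exact congrArg ULift.up (PhiMap_natural ha (p := m'.unop.len) (k := m.unop.len) φ.unop g)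

end Phi

section Ev
variable {n l : ℕ} {f : Fin (n + 1) → Fin (l + 1)} {a : Fin (n + 1)} (ha : ∀ x, f a ≤ f x)

noncomputable def evm (n l : ℕ) (f : Fin (n + 1) → Fin (l + 1)) (t : unitInterval) :
    Ksp n l f ⟶ SSet.toTop.obj (Cf n l f) :=
  TopCat.ofHom ⟨fun h => h t, continuous_eval_const t⟩

lemma phi_zero {k : ℕ} (g : (Cf n l f).obj (op ⦋k⦌)) :
    PhiMap ha g ≫ evm n l f 0 = ptMap (Cf n l f) g := by
  apply TopCat.hom_ext
  refine ContinuousMap.ext fun q => ?_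
  show PM ha g (q, 0) = (ptMap (Cf n l f) g) q
  calc PM ha g (q, 0)
      = (ptMap (Cf n l f) (coneS ha g)) (ULift.up (conePt q.down 0)) := rfl
    _ = (ptMap (Cf n l f) (coneS ha g))
          (SimplexCategory.toTop.map (SimplexCategory.δ (0 : Fin (k + 2))) q) := by
        congr 1
        apply ULift.ext
        show conePt q.down 0 = stdSimplex.map (SimplexCategory.δ (0 : Fin (k + 2))).toOrderHom q.down
        rw [delta0_fun]
        exact conePt_zero _
    _ = (ptMap (Cf n l f)
          ((Cf n l f).map (SimplexCategory.δ (0 : Fin (k + 2))).op (coneS ha g))) q := by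
        rw [ptMap_comp]
        rfl
    _ = (ptMap (Cf n l f) g) q := by
        rw [map_δ₀]

noncomputable def basePt (n l : ℕ) (f : Fin (n + 1) → Fin (l + 1)) (a : Fin (n + 1)) :
    SSet.toTop.obj (Cf n l f) :=
  (ptMap (Cf n l f) (aZero (a := a))) default

lemma phi_one {k : ℕ} (g : (Cf n l f).obj (op ⦋k⦌)) :
    PhiMap ha g ≫ evm n l f 1
      = TopCat.ofHom ⟨fun _ => basePt n l f a, continuous_const⟩ := by
  apply TopCat.hom_ext
  refine ContinuousMap.ext fun q => ?_
  show PM ha g (q, 1) = basePt n l f a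
  calc PM ha g (q, 1)
      = (ptMap (Cf n l f) (coneS ha g)) (ULift.up (conePt q.down 1)) := rfl
    _ = (ptMap (Cf n l f) (coneS ha g))
          (SimplexCategory.toTop.map (SimplexCategory.const ⦋k⦌ ⦋k + 1⦌ 0) q) := by
        congr 1
        apply ULift.ext
        show conePt q.down 1 =
          stdSimplex.map (SimplexCategory.const ⦋k⦌ ⦋k + 1⦌ 0).toOrderHom q.down
        exact conePt_one _
    _ = (ptMap (Cf n l f)
          ((Cf n l f).map (SimplexCategory.const ⦋k⦌ ⦋k + 1⦌ 0).op (coneS ha g))) q := by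
        rw [ptMap_comp]
        rfl
    _ = (ptMap (Cf n l f)
          ((Cf n l f).map (SimplexCategory.const ⦋k⦌ ⦋0⦌ 0).op (aZero (a := a)))) q := by
        rw [map_const ha g]
    _ = (ptMap (Cf n l f) (aZero (a := a)))
          (SimplexCategory.toTop.map (SimplexCategory.const ⦋k⦌ ⦋0⦌ 0) q) := by
        rw [ptMap_comp]
        rfl
    _ = basePt n l f a := by
        exact congrArg _ (Subsingleton.elim _ _)

end Ev

end Stmt3Aux

open Stmt3Aux Opposite in
/-- the geometric realization of `C^f` is contractible. -/
theorem stmt3 (n l : ℕ) (f : Fin (n + 1) → Fin (l + 1)) :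
    ContractibleSpace (SSet.toTop.obj (Cf n l f)) := by
  obtain ⟨a, ha⟩ := Finite.exists_min f
  let X := Cf n l f
  let H : SSet.toTop.obj X ⟶ Ksp n l f := (sSetTopAdj.homEquiv X (Ksp n l f)).symm (Phi ha)
  have hH : sSetTopAdj.homEquiv X (Ksp n l f) H = Phi ha := (sSetTopAdj.homEquiv X _).apply_symm_apply _
  have hptH : ∀ (m : SimplexCategoryᵒᵖ) (g : X.obj m),
      ptMap X g ≫ H = PhiMap ha (k := m.unop.len) g := by
    intro m g
    rw [← homEquiv_app X _ H m g, hH]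
    rfl
  have h0 : H ≫ evm n l f 0 = 𝟙 (SSet.toTop.obj X) := by
    apply hom_ext
    intro m g
    rw [← Category.assoc, hptH m g, Category.comp_id]
    exact phi_zero ha (k := m.unop.len) g
  have h1 : H ≫ evm n l f 1 = TopCat.ofHom ⟨fun _ => basePt n l f a, continuous_const⟩ := by
    apply hom_ext
    intro m g
    rw [← Category.assoc, hptH m g]
    exact (phi_one ha (k := m.unop.len) g).trans rfl
  have hne : (ContinuousMap.id (SSet.toTop.obj X)).Nullhomotopic := by
    refine ⟨basePt n l f a, ⟨?_⟩⟩
    refine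
      { toContinuousMap :=
          ((H.hom : C(SSet.toTop.obj X, C(unitInterval, SSet.toTop.obj X))).uncurry).comp
            ContinuousMap.prodSwap,
        map_zero_left := fun p => ConcreteCategory.congr_hom h0 p,
        map_one_left := fun p => ConcreteCategory.congr_hom h1 p }
  exact (contractible_iff_id_nullhomotopic _).2 hne
end

section
/- Let K be a simplicial set, σ ∈ K_m a nondegenerate simplex, and f : ⟨n⟩ → ⟨m⟩ a surjective function. If g : ⟨p⟩ → ⟨n⟩ is a surjective function and there exists τ ∈ K_p with (τ, id_{⟨p⟩}) ∼ (σ, f∘g) in S(K)_p, then f∘g is weakly increasing and τ = (f∘g)^*(σ). (Equivalently: the simplicial set H from the proof of the coinitiality proposition is covered by the simplicial subsets H_{(1,A)} of simplices with image contained in a proper subset A ⊊ ⟨n⟩ together with the simplicial subset H_{(0,⟨n⟩)} of simplices g with f∘g weakly increasing.) -/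
open CategoryTheory Opposite Simplicial

universe u

/-! ### Auxiliary material -/

namespace Stmt8Aux

open Function Finset

/-- Build a morphism of the simplex category from an order hom. -/
def homOf {x y : SimplexCategory} (φ : Fin (x.len + 1) →o Fin (y.len + 1)) : x ⟶ y :=
  SimplexCategory.Hom.mk φ

@[simp] lemma homOf_toOrderHom {x y : SimplexCategory}
    (φ : Fin (x.len + 1) →o Fin (y.len + 1)) :
    (homOf φ).toOrderHom = φ := rfl

lemma hom_ext {x y : SimplexCategory} (f g : x ⟶ y)
    (h : ∀ i, f.toOrderHom i = g.toOrderHom i) : f = g :=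
  SimplexCategory.Hom.ext _ _ (OrderHom.ext _ _ (funext h))

lemma comp_app {x y z : SimplexCategory} (f : x ⟶ y) (g : y ⟶ z) (i : Fin (x.len + 1)) :
    (f ≫ g).toOrderHom i = g.toOrderHom (f.toOrderHom i) := rfl

lemma comp_surj {x y z : SimplexCategory} {f : x ⟶ y} {g : y ⟶ z}
    (hf : Surjective f.toOrderHom) (hg : Surjective g.toOrderHom) :
    Surjective (f ≫ g).toOrderHom := by
  intro i
  obtain ⟨j, hj⟩ := hg i
  obtain ⟨l, hl⟩ := hf j
  exact ⟨l, by rw [comp_app, hl, hj]⟩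

lemma map_comp_apply' (K : SSet.{u}) {x y z : SimplexCategory} (f : x ⟶ y) (g : y ⟶ z)
    (σ : K.obj (op z)) : K.map (f ≫ g).op σ = K.map f.op (K.map g.op σ) := by
  rw [op_comp, FunctorToTypes.map_comp_apply]

/-- A strictly monotone self-map of `Fin n` is the identity. -/
lemma strictMono_fin_id {n : ℕ} (φ : Fin n → Fin n) (hφ : StrictMono φ) : φ = id := by
  have h : (Finset.univ : Finset (Fin n)).card = n := by simp
  have h1 : φ = Finset.univ.orderEmbOfFin h :=
    Finset.orderEmbOfFin_unique h (fun x => Finset.mem_univ _) hφ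
  have h2 : (id : Fin n → Fin n) = Finset.univ.orderEmbOfFin h :=
    Finset.orderEmbOfFin_unique h (fun x => Finset.mem_univ _) strictMono_id
  rw [h1, h2]

/-- A surjective morphism `e ⟶ e` in the simplex category is the identity. -/
lemma endo_surj_eq_id {e : SimplexCategory} (φ : e ⟶ e)
    (hs : Surjective φ.toOrderHom) : φ = 𝟙 e := by
  have hinj : Function.Injective φ.toOrderHom := (Finite.injective_iff_surjective).2 hs
  have hsm : StrictMono φ.toOrderHom := φ.toOrderHom.monotone.strictMono_of_injective hinj
  apply hom_ext
  intro x
  have := congrFun (strictMono_fin_id _ hsm) x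
  simpa using this

section Img

variable {a b : ℕ} (φ : Fin (a + 1) → Fin (b + 1))

/-- One less than the cardinality of the image of `φ`. -/
def imgk : ℕ := (Finset.image φ Finset.univ).card - 1

lemma imgcard : (Finset.image φ Finset.univ).card = imgk φ + 1 := by
  have : 0 < (Finset.image φ Finset.univ).card :=
    Finset.card_pos.2 ⟨φ 0, Finset.mem_image_of_mem _ (Finset.mem_univ _)⟩
  simp only [imgk]
  omega

/-- The increasing enumeration of the image of `φ`. -/
noncomputable def imgEmb : Fin (imgk φ + 1) ↪o Fin (b + 1) :=
  Finset.orderEmbOfFin _ (imgcard φ)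

lemma imgEmb_mem (i : Fin (imgk φ + 1)) : imgEmb φ i ∈ Finset.image φ Finset.univ :=
  Finset.orderEmbOfFin_mem _ _ _

lemma mem_range_imgEmb (x : Fin (a + 1)) : φ x ∈ Set.range (imgEmb φ) := by
  rw [imgEmb, Finset.range_orderEmbOfFin]
  exact Finset.mem_coe.2 (Finset.mem_image_of_mem _ (Finset.mem_univ _))

lemma imgk_le : imgk φ ≤ b := by
  have h1 := imgcard φ
  have h2 : (Finset.image φ Finset.univ).card ≤ b + 1 := by
    simpa using (Finset.image φ Finset.univ).card_le_univ
  omega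

lemma imgk_lt (h : ¬ Surjective φ) : imgk φ < b := by
  have h1 := imgcard φ
  have hne : Finset.image φ Finset.univ ≠ Finset.univ := by
    intro heq
    apply h
    intro y
    have : y ∈ Finset.image φ Finset.univ := heq ▸ Finset.mem_univ y
    obtain ⟨x, -, hx⟩ := Finset.mem_image.1 this
    exact ⟨x, hx⟩
  have h2 : (Finset.image φ Finset.univ).card < b + 1 := by
    have := Finset.card_lt_card (Finset.ssubset_iff_subset_ne.2
      ⟨Finset.subset_univ _, hne⟩)
    simpa using this
  omega

end Img

/-- Factor a map through a strictly monotone map whose range contains its range. -/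
lemma factor_through {j k c : ℕ} (μ : Fin (k + 1) → Fin (c + 1)) (hμ : StrictMono μ)
    (ψ : Fin (j + 1) → Fin (c + 1)) (him : ∀ x, ψ x ∈ Set.range μ) :
    ∃ w : Fin (j + 1) → Fin (k + 1), (∀ x, μ (w x) = ψ x) ∧
      (Monotone ψ → Monotone w) ∧ ((∀ y, μ y ∈ Set.range ψ) → Surjective w) := by
  choose w hw using him
  refine ⟨w, fun x => hw x, ?_, ?_⟩
  · intro hψ x y hxy
    have : μ (w x) ≤ μ (w y) := by rw [hw x, hw y]; exact hψ hxy
    exact hμ.le_iff_le.1 this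
  · intro hsur y
    obtain ⟨x, hx⟩ := hsur y
    refine ⟨x, hμ.injective ?_⟩
    rw [hw x, ← hx]

/-- Image factorization: `φ = imgEmb φ ∘ w` with `w` surjective (and monotone if `φ` is). -/
lemma img_fact {a b : ℕ} (φ : Fin (a + 1) → Fin (b + 1)) :
    ∃ w : Fin (a + 1) → Fin (imgk φ + 1), (∀ x, imgEmb φ (w x) = φ x) ∧
      Surjective w ∧ (Monotone φ → Monotone w) := by
  obtain ⟨w, hw, hmono, hsur⟩ :=
    factor_through (imgEmb φ) (imgEmb φ).strictMono φ (mem_range_imgEmb φ)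
  refine ⟨w, hw, hsur ?_, hmono⟩
  intro y
  have := imgEmb_mem φ y
  obtain ⟨x, -, hx⟩ := Finset.mem_image.1 this
  exact ⟨x, hx⟩

variable {K : SSet.{u}}

/-- If `σ₂ = φ^*(σ₁)` with `σ₂` nondegenerate, the image of `φ` has at least
`e₂.len + 1` elements. -/
lemma len_le_imgk {e₁ e₂ : SimplexCategory} (φ : e₂ ⟶ e₁) (σ₁ : K.obj (op e₁))
    (σ₂ : K.obj (op e₂)) (n₂ : IsNondegenerateSimplex K σ₂)
    (h : σ₂ = K.map φ.op σ₁) : e₂.len ≤ imgk ⇑φ.toOrderHom := by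
  by_contra hlt
  push_neg at hlt
  obtain ⟨w, hw, hsur, hmono⟩ := img_fact ⇑φ.toOrderHom
  have hwm : Monotone w := hmono φ.toOrderHom.monotone
  let homw : e₂ ⟶ SimplexCategory.mk (imgk ⇑φ.toOrderHom) := homOf ⟨w, hwm⟩
  let homemb : SimplexCategory.mk (imgk ⇑φ.toOrderHom) ⟶ e₁ :=
    homOf ⟨⇑(imgEmb ⇑φ.toOrderHom), (imgEmb ⇑φ.toOrderHom).monotone⟩
  have hfac : φ = homw ≫ homemb := by
    apply hom_ext
    intro x
    rw [comp_app]
    exact (hw x).symm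
  have : σ₂ = K.map homw.op (K.map homemb.op σ₁) := by
    rw [← map_comp_apply', ← hfac]; exact h
  exact n₂ (SimplexCategory.mk (imgk ⇑φ.toOrderHom)) (by simpa using hlt) homw hsur
    (K.map homemb.op σ₁) this

/-- Monotone sections of surjective morphisms, through a prescribed point. -/
lemma section_exists {d e : SimplexCategory} (s : d ⟶ e)
    (hs : Surjective s.toOrderHom) (i : Fin (d.len + 1)) :
    ∃ u : e ⟶ d, (∀ j, s.toOrderHom (u.toOrderHom j) = j) ∧
      u.toOrderHom (s.toOrderHom i) = i := by
  classical
  let fn : Fin (e.len + 1) → Fin (d.len + 1) :=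
    fun j => if j = s.toOrderHom i then i else (hs j).choose
  have hsec : ∀ j, s.toOrderHom (fn j) = j := by
    intro j
    by_cases hj : j = s.toOrderHom i
    · simp [fn, hj]
    · simp only [fn, if_neg hj]
      exact (hs j).choose_spec
  have hmono : Monotone fn := by
    intro j₁ j₂ hle
    rcases eq_or_lt_of_le hle with rfl | hlt
    · exact le_refl _
    · by_contra hcon
      push_neg at hcon
      have : s.toOrderHom (fn j₂) ≤ s.toOrderHom (fn j₁) :=
        s.toOrderHom.monotone hcon.le
      rw [hsec j₁, hsec j₂] at this
      exact absurd this (not_le_of_gt hlt)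
  refine ⟨homOf ⟨fn, hmono⟩, hsec, ?_⟩
  show fn (s.toOrderHom i) = i
  simp [fn]

/-- Eilenberg–Zilber, existence. -/
lemma ez_exists (K : SSet.{u}) {d : SimplexCategory} (σ : K.obj (op d)) :
    ∃ (c : SimplexCategory) (t : d ⟶ c) (ρ : K.obj (op c)),
      Surjective t.toOrderHom ∧ IsNondegenerateSimplex K ρ ∧ σ = K.map t.op ρ := by
  suffices h : ∀ (N : ℕ) (d : SimplexCategory), d.len < N → ∀ σ : K.obj (op d),
      ∃ (c : SimplexCategory) (t : d ⟶ c) (ρ : K.obj (op c)),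
        Surjective t.toOrderHom ∧ IsNondegenerateSimplex K ρ ∧ σ = K.map t.op ρ by
    exact h (d.len + 1) d (Nat.lt_succ_self _) σ
  intro N
  induction N with
  | zero => intro d hd; omega
  | succ N ih =>
    intro d hd σ
    by_cases hσ : IsNondegenerateSimplex K σ
    · refine ⟨d, 𝟙 d, σ, ?_, hσ, ?_⟩
      · intro y; exact ⟨y, rfl⟩
      · rw [op_id, FunctorToTypes.map_id_apply]
    · unfold IsNondegenerateSimplex at hσ
      push_neg at hσ
      obtain ⟨e, hlt, s, hs, τ', heq⟩ := hσ
      obtain ⟨c, t, ρ, ht, hρ, hτ'⟩ := ih e (by omega) τ'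
      refine ⟨c, s ≫ t, ρ, comp_surj hs ht, hρ, ?_⟩
      rw [map_comp_apply', ← hτ', heq]

lemma ez_le {d e₁ e₂ : SimplexCategory} (s₁ : d ⟶ e₁) (s₂ : d ⟶ e₂)
    (hs₂ : Surjective s₂.toOrderHom) {σ₁ : K.obj (op e₁)} {σ₂ : K.obj (op e₂)}
    (n₂ : IsNondegenerateSimplex K σ₂)
    (hh : K.map s₁.op σ₁ = K.map s₂.op σ₂) : e₂.len ≤ e₁.len := by
  obtain ⟨u, hu, -⟩ := section_exists s₂ hs₂ 0
  have hu2 : u ≫ s₂ = 𝟙 e₂ := hom_ext _ _ fun j => by rw [comp_app, hu j]; rfl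
  have hσ₂ : σ₂ = K.map (u ≫ s₁).op σ₁ := by
    rw [map_comp_apply', hh, ← map_comp_apply', hu2, op_id, FunctorToTypes.map_id_apply]
  have h1 := len_le_imgk (K := K) (u ≫ s₁) σ₁ σ₂ n₂ hσ₂
  have h2 := imgk_le ⇑(u ≫ s₁).toOrderHom
  omega

lemma ez_unique_len {d e₁ e₂ : SimplexCategory} (s₁ : d ⟶ e₁) (s₂ : d ⟶ e₂)
    (hs₁ : Surjective s₁.toOrderHom) (hs₂ : Surjective s₂.toOrderHom)
    {σ₁ : K.obj (op e₁)} {σ₂ : K.obj (op e₂)}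
    (n₁ : IsNondegenerateSimplex K σ₁) (n₂ : IsNondegenerateSimplex K σ₂)
    (hh : K.map s₁.op σ₁ = K.map s₂.op σ₂) : e₁ = e₂ :=
  SimplexCategory.ext (le_antisymm (ez_le s₂ s₁ hs₁ n₁ hh.symm) (ez_le s₁ s₂ hs₂ n₂ hh))

/-- Eilenberg–Zilber, uniqueness with equal codomains. -/
lemma ez_unique_eq {d e : SimplexCategory} (s₁ s₂ : d ⟶ e)
    (hs₂ : Surjective s₂.toOrderHom) {σ₁ σ₂ : K.obj (op e)}
    (n₂ : IsNondegenerateSimplex K σ₂)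
    (hh : K.map s₁.op σ₁ = K.map s₂.op σ₂) : σ₁ = σ₂ ∧ s₁ = s₂ := by
  have key : ∀ i : Fin (d.len + 1), ∃ ψ : e ⟶ e, σ₂ = K.map ψ.op σ₁ ∧
      ψ.toOrderHom (s₂.toOrderHom i) = s₁.toOrderHom i := by
    intro i
    obtain ⟨u, hu, hui⟩ := section_exists s₂ hs₂ i
    have hu2 : u ≫ s₂ = 𝟙 e := hom_ext _ _ fun j => by rw [comp_app, hu j]; rfl
    have hσ₂ : σ₂ = K.map (u ≫ s₁).op σ₁ := by
      rw [map_comp_apply', hh, ← map_comp_apply', hu2, op_id, FunctorToTypes.map_id_apply]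
    refine ⟨u ≫ s₁, hσ₂, ?_⟩
    rw [comp_app, hui]
  have hsurj : ∀ ψ : e ⟶ e, σ₂ = K.map ψ.op σ₁ → ψ = 𝟙 e := by
    intro ψ hψ
    apply endo_surj_eq_id
    by_contra hns
    have hlt := imgk_lt ⇑ψ.toOrderHom hns
    have hle := len_le_imgk (K := K) ψ σ₁ σ₂ n₂ hψ
    omega
  obtain ⟨ψ, hψ, -⟩ := key 0
  have hσeq : σ₁ = σ₂ := by
    rw [hψ, hsurj ψ hψ, op_id, FunctorToTypes.map_id_apply]
  refine ⟨hσeq, hom_ext _ _ fun i => ?_⟩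
  obtain ⟨ψ', hψ', hev⟩ := key i
  rw [hsurj ψ' hψ'] at hev
  exact hev.symm

variable (K)

/-- `Char P q σ₀ h` says that the normal form of the pair `P` is the
good pair `(σ₀, h)` with `σ₀` a nondegenerate `q`-simplex and `h` surjective. -/
def Char {p : ℕ} (P : SymPair K p) (q : ℕ) (σ₀ : K.obj (op (SimplexCategory.mk q)))
    (h : Fin (p + 1) → Fin (q + 1)) : Prop :=
  IsNondegenerateSimplex K σ₀ ∧
  ∃ (k : ℕ) (μ : SimplexCategory.mk k ⟶ P.d) (t : SimplexCategory.mk k ⟶ SimplexCategory.mk q)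
    (f₁ : Fin (p + 1) → Fin (k + 1)),
      StrictMono μ.toOrderHom ∧ Surjective t.toOrderHom ∧ Surjective f₁ ∧
      (∀ x, μ.toOrderHom (f₁ x) = P.f x) ∧ (∀ x, t.toOrderHom (f₁ x) = h x) ∧
      K.map μ.op P.σ = K.map t.op σ₀

variable {K}

/-- A good pair is its own normal form. -/
lemma char_good {p q : ℕ} (σ₀ : K.obj (op (SimplexCategory.mk q)))
    (hσ₀ : IsNondegenerateSimplex K σ₀) (h : Fin (p + 1) → Fin (q + 1))
    (hh : Surjective h) : Char K ⟨SimplexCategory.mk q, σ₀, h⟩ q σ₀ h := by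
  refine ⟨hσ₀, q, 𝟙 _, 𝟙 _, h, ?_, fun y => ⟨y, rfl⟩, hh, fun x => rfl, fun x => rfl, rfl⟩
  intro x y hxy
  exact hxy

/-- Invariance of `Char` under the generating relation, direction `Q → P`. -/
lemma char_rel_left {p : ℕ} {d e : SimplexCategory} (g : d ⟶ e) (σ : K.obj (op e))
    (f : Fin (p + 1) → Fin (d.len + 1)) {q : ℕ} {σ₀ : K.obj (op (SimplexCategory.mk q))}
    {h : Fin (p + 1) → Fin (q + 1)}
    (hc : Char K ⟨d, K.map g.op σ, f⟩ q σ₀ h) :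
    Char K ⟨e, σ, g.toOrderHom ∘ f⟩ q σ₀ h := by
  obtain ⟨hσ₀, k, μ, t, f₁, hμ, ht, hf₁, hcomm, hcomm2, hKey⟩ := hc
  -- factor `μ ≫ g` through its image
  set ψ : SimplexCategory.mk k ⟶ e := μ ≫ g with hψdef
  obtain ⟨w, hw, hwsur, hwmono⟩ := img_fact ⇑ψ.toOrderHom
  have hwm : Monotone w := hwmono ψ.toOrderHom.monotone
  let homw : SimplexCategory.mk k ⟶ SimplexCategory.mk (imgk ⇑ψ.toOrderHom) := homOf ⟨w, hwm⟩
  let homemb : SimplexCategory.mk (imgk ⇑ψ.toOrderHom) ⟶ e :=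
    homOf ⟨⇑(imgEmb ⇑ψ.toOrderHom), (imgEmb ⇑ψ.toOrderHom).monotone⟩
  have hfac : ψ = homw ≫ homemb := by
    apply hom_ext
    intro x
    rw [comp_app]
    exact (hw x).symm
  -- Eilenberg–Zilber for the restriction of σ to the image
  obtain ⟨c, v, ρ, hv, hρ, hρeq⟩ := ez_exists K (K.map homemb.op σ)
  -- compare through `ez_unique`
  have hcmp : K.map (homw ≫ v).op ρ = K.map t.op σ₀ := by
    rw [map_comp_apply', ← hρeq, ← map_comp_apply', ← hfac, hψdef, map_comp_apply']
    exact hKey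
  have hwhomsur : Surjective homw.toOrderHom := hwsur
  have hceq : c = SimplexCategory.mk q :=
    ez_unique_len (homw ≫ v) t (comp_surj hwhomsur hv) ht hρ hσ₀ hcmp
  subst hceq
  obtain ⟨hρσ, hvt⟩ := ez_unique_eq (homw ≫ v) t ht hσ₀ hcmp
  refine ⟨hσ₀, imgk ⇑ψ.toOrderHom, homemb, v, w ∘ f₁, (imgEmb ⇑ψ.toOrderHom).strictMono, hv,
    hwsur.comp hf₁, ?_, ?_, ?_⟩
  · intro x
    show (imgEmb ⇑ψ.toOrderHom) (w (f₁ x)) = g.toOrderHom (f x)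
    rw [hw (f₁ x)]
    show (μ ≫ g).toOrderHom (f₁ x) = g.toOrderHom (f x)
    rw [comp_app, hcomm x]
  · intro x
    show v.toOrderHom (w (f₁ x)) = h x
    rw [← hcomm2 x, ← hvt]
    rfl
  · show K.map homemb.op σ = K.map v.op σ₀
    rw [hρeq, hρσ]

/-- Invariance of `Char` under the generating relation, direction `P → Q`. -/
lemma char_rel_right {p : ℕ} {d e : SimplexCategory} (g : d ⟶ e) (σ : K.obj (op e))
    (f : Fin (p + 1) → Fin (d.len + 1)) {q : ℕ} {σ₀ : K.obj (op (SimplexCategory.mk q))}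
    {h : Fin (p + 1) → Fin (q + 1)}
    (hc : Char K ⟨e, σ, g.toOrderHom ∘ f⟩ q σ₀ h) :
    Char K ⟨d, K.map g.op σ, f⟩ q σ₀ h := by
  obtain ⟨hσ₀, k, μ, t, f₁, hμ, ht, hf₁, hcomm, hcomm2, hKey⟩ := hc
  -- factor `f` through its image
  obtain ⟨f₂, hf₂, hf₂sur, -⟩ := img_fact f
  let homemb : SimplexCategory.mk (imgk f) ⟶ d := homOf ⟨⇑(imgEmb f), (imgEmb f).monotone⟩
  set ψ : SimplexCategory.mk (imgk f) ⟶ e := homemb ≫ g with hψdef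
  have hψapp : ∀ x, ψ.toOrderHom x = g.toOrderHom (imgEmb f x) := fun x => rfl
  have hμsm : StrictMono (⇑μ.toOrderHom : Fin (k+1) → Fin (e.len+1)) := hμ
  -- factor ψ through μ
  have hrange : ∀ x, ψ.toOrderHom x ∈ Set.range ⇑μ.toOrderHom := by
    intro x
    obtain ⟨z, -, hz⟩ := Finset.mem_image.1 (imgEmb_mem f x)
    refine ⟨f₁ z, ?_⟩
    rw [hcomm z, hψapp x, ← hz]
    rfl
  obtain ⟨e₄, he₄, he₄mono, he₄sur⟩ := factor_through _ hμsm _ hrange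
  have he₄m : Monotone e₄ := he₄mono ψ.toOrderHom.monotone
  have he₄s : Surjective e₄ := by
    apply he₄sur
    intro y
    obtain ⟨z, hz⟩ := hf₁ y
    refine ⟨f₂ z, ?_⟩
    rw [hψapp, hf₂ z, ← hz, hcomm z]
    rfl
  let home₄ : SimplexCategory.mk (imgk f) ⟶ SimplexCategory.mk k := homOf ⟨e₄, he₄m⟩
  have hfac : ψ = home₄ ≫ μ := by
    apply hom_ext
    intro x
    rw [comp_app]
    exact (he₄ x).symm
  have he₄f₂ : ∀ x, e₄ (f₂ x) = f₁ x := by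
    intro x
    apply hμsm.injective
    rw [he₄ (f₂ x), hψapp, hf₂ x, hcomm x]
    rfl
  refine ⟨hσ₀, imgk f, homemb, home₄ ≫ t, f₂, (imgEmb f).strictMono,
    comp_surj (f := home₄) he₄s ht, hf₂sur, fun x => hf₂ x, ?_, ?_⟩
  · intro x
    rw [comp_app]
    show t.toOrderHom (e₄ (f₂ x)) = h x
    rw [he₄f₂ x]
    exact hcomm2 x
  · show K.map homemb.op (K.map g.op σ) = K.map (home₄ ≫ t).op σ₀
    rw [← map_comp_apply', ← hψdef, hfac, map_comp_apply', hKey, ← map_comp_apply']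

/-- `Char` is invariant along the equivalence relation generated by `SymRel`. -/
lemma char_eqvGen {p : ℕ} {P Q : SymPair K p} (hPQ : Relation.EqvGen (SymRel K p) P Q)
    {q : ℕ} {σ₀ : K.obj (op (SimplexCategory.mk q))} {h : Fin (p + 1) → Fin (q + 1)} :
    Char K P q σ₀ h ↔ Char K Q q σ₀ h := by
  induction hPQ with
  | rel x y hxy =>
    cases hxy with
    | mk g σ f => exact ⟨char_rel_right g σ f, char_rel_left g σ f⟩
  | refl x => rfl
  | symm x y _ ih => exact ih.symm
  | trans x y z _ _ ih₁ ih₂ => exact ih₁.trans ih₂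

end Stmt8Aux

open Stmt8Aux Function in
/-- if `σ ∈ K_m` is nondegenerate, `f : ⟨n⟩ → ⟨m⟩` is surjective,
`g : ⟨p⟩ → ⟨n⟩` is surjective and `(τ, id) ∼ (σ, f ∘ g)` in `S(K)_p` for some
`τ ∈ K_p`, then `f ∘ g` is weakly increasing and `τ = (f ∘ g)^*(σ)`. -/
theorem stmt8 (K : SSet.{u}) {m : ℕ} (σ : K.obj (op (SimplexCategory.mk m)))
    (hσ : IsNondegenerateSimplex K σ) {n : ℕ} (f : Fin (n + 1) → Fin (m + 1))
    (hf : Function.Surjective f) {p : ℕ} (g : Fin (p + 1) → Fin (n + 1))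
    (hg : Function.Surjective g) (τ : K.obj (op (SimplexCategory.mk p)))
    (hτ : Quot.mk (SymRel K p) ⟨SimplexCategory.mk p, τ, id⟩ =
      Quot.mk _ ⟨SimplexCategory.mk m, σ, f ∘ g⟩) :
    ∃ hmono : Monotone (f ∘ g),
      τ = K.map (SimplexCategory.mkHom ⟨f ∘ g, hmono⟩).op σ := by
  have heqv := Quot.eq.1 hτ
  have hB : Char K ⟨SimplexCategory.mk m, σ, f ∘ g⟩ m σ (f ∘ g) :=
    char_good σ hσ (f ∘ g) (hf.comp hg)
  have hA : Char K ⟨SimplexCategory.mk p, τ, id⟩ m σ (f ∘ g) :=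
    (char_eqvGen heqv).2 hB
  obtain ⟨-, k, μ, t, f₁, hμ, ht, hf₁, hcomm, hcomm2, hKey⟩ := hA
  have hμsur : Surjective ⇑μ.toOrderHom := fun y => ⟨f₁ y, hcomm y⟩
  have hbij : Bijective (⇑μ.toOrderHom : Fin (k + 1) → Fin (p + 1)) :=
    ⟨hμ.injective, hμsur⟩
  have hk : k = p := by
    have := Fintype.card_of_bijective hbij
    simpa using this
  subst hk
  have hμid : (⇑μ.toOrderHom : Fin (k + 1) → Fin (k + 1)) = _root_.id :=
    strictMono_fin_id _ hμ
  have hμ1 : μ = 𝟙 _ := hom_ext _ _ fun x => congrFun hμid x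
  have hf₁id : ∀ x, f₁ x = x := by
    intro x
    have := hcomm x
    rw [hμ1] at this
    exact this
  have hmono : Monotone (f ∘ g) := by
    have heq : (f ∘ g) = ⇑t.toOrderHom := by
      funext x
      rw [← hcomm2 x, hf₁id x]
    rw [heq]
    exact t.toOrderHom.monotone
  refine ⟨hmono, ?_⟩
  have hthom : SimplexCategory.mkHom ⟨f ∘ g, hmono⟩ = t := by
    apply hom_ext
    intro x
    show (f ∘ g) x = t.toOrderHom x
    rw [← hcomm2 x, hf₁id x]
  rw [hthom]
  rw [hμ1] at hKey
  rw [← hKey, op_id, FunctorToTypes.map_id_apply]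
end

section
/- Let X be a topological space, 𝔅 a basis for its topology, U ⊆ X open, and B₀ ∈ 𝔅 with B₀ ⊆ U. Let T be the simplicial set whose n-simplices are the functions O assigning to each nonempty subset A ⊆ {0,…,n} an element O(A) ∈ 𝔅 with B₀ ⊆ O(A) ⊆ U, where a weakly increasing map u : ⟨m⟩ → ⟨n⟩ acts by O ↦ (A ↦ O(u(A))). Then T is a trivial (contractible) Kan complex: T is nonempty and every map ∂Δ^n → T, n ≥ 1, extends to Δ^n. -/
open CategoryTheory Opposite Simplicial

lemma O_congr {γ : Sort*} {k : ℕ}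
    (O : ∀ A : Finset (Fin k), A.Nonempty → γ)
    {A B : Finset (Fin k)} (h : A = B) {hA : A.Nonempty} {hB : B.Nonempty} :
    O A hA = O B hB := by subst h; rfl

/-- The simplicial set `T` whose `n`-simplices are the functions `O` assigning to each
nonempty subset `A ⊆ {0, …, n}` an element `O(A) ∈ 𝔅` with `B₀ ⊆ O(A) ⊆ U`, with a
weakly increasing map `u` acting by `O ↦ (A ↦ O(u(A)))`. -/
def basisSections {X : Type} (𝔅 : Set (Set X)) (B₀ Uo : Set X) : SSet where
  obj a := ∀ A : Finset (Fin (a.unop.len + 1)), A.Nonempty →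
    { B : Set X // B ∈ 𝔅 ∧ B₀ ⊆ B ∧ B ⊆ Uo }
  map {a b} u := TypeCat.ofHom fun O => fun A hA => O (A.image u.unop.toOrderHom) (hA.image _)
  map_id a := by
    ext : 2
    funext O A hA
    exact O_congr O (by simp)
  map_comp {a b c} u v := by
    ext : 2
    funext O A hA
    exact O_congr O (by simp [Finset.image_image])

namespace Stmt11Aux

open SSet SimplexCategory

/-- The inclusion of a nonempty proper subset `B ⊆ Fin (n+2)` as a boundary simplex. -/
def ιSimplex {n : ℕ} (B : Finset (Fin (n + 2))) (hB : B.Nonempty) (hB' : B ≠ Finset.univ) :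
    (∂Δ[n + 1] : SSet).obj (op (SimplexCategory.mk (B.card - 1))) :=
  ⟨stdSimplex.objMk
      (B.orderEmbOfFin (Nat.succ_pred_eq_of_pos hB.card_pos).symm).toOrderHom, by
    intro hs
    apply hB'
    apply Finset.eq_univ_of_forall
    intro y
    obtain ⟨x, hx⟩ := hs y
    have hx' : B.orderEmbOfFin (Nat.succ_pred_eq_of_pos hB.card_pos).symm x = y := hx
    exact hx' ▸ Finset.orderEmbOfFin_mem _ _ x⟩

variable {X : Type} {𝔅 : Set (Set X)} {B₀ Uo : Set X}

/-- The value assignment used to extend `τ`. -/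
def F {n : ℕ} (τ : (∂Δ[n + 1] : SSet) ⟶ basisSections 𝔅 B₀ Uo)
    (b0 : { B : Set X // B ∈ 𝔅 ∧ B₀ ⊆ B ∧ B ⊆ Uo })
    (B : Finset (Fin (n + 2))) (hB : B.Nonempty) :
    { B : Set X // B ∈ 𝔅 ∧ B₀ ⊆ B ∧ B ⊆ Uo } :=
  if h : B = Finset.univ then b0
  else τ.app (op (SimplexCategory.mk (B.card - 1))) (ιSimplex B hB h)
    Finset.univ Finset.univ_nonempty


lemma key {n : ℕ} (τ : (∂Δ[n + 1] : SSet) ⟶ basisSections 𝔅 B₀ Uo)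
    (b0 : { B : Set X // B ∈ 𝔅 ∧ B₀ ⊆ B ∧ B ⊆ Uo })
    {m : SimplexCategoryᵒᵖ} (u : (∂Δ[n + 1] : SSet).obj m)
    (A : Finset (Fin (m.unop.len + 1))) (hA : A.Nonempty) :
    τ.app m u A hA = F τ b0 (A.image (stdSimplex.asOrderHom u.1)) (hA.image _) := by
  set f : Fin (m.unop.len + 1) →o Fin (n + 2) := stdSimplex.asOrderHom u.1 with hf
  set B : Finset (Fin (n + 2)) := A.image f with hBdef
  have hBne : B.Nonempty := hA.image _
  have hBuniv : B ≠ Finset.univ := by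
    intro h
    apply u.2
    intro y
    have : y ∈ B := h ▸ Finset.mem_univ y
    obtain ⟨x, _, hx⟩ := Finset.mem_image.mp this
    exact ⟨x, hx⟩
  rw [F, dif_neg hBuniv]
  -- the inclusion of A
  have hAcard : A.card = A.card - 1 + 1 := (Nat.succ_pred_eq_of_pos hA.card_pos).symm
  set ιA := A.orderEmbOfFin hAcard with hιA
  set w : SimplexCategory.mk (A.card - 1) ⟶ m.unop := SimplexCategory.Hom.mk ιA.toOrderHom
    with hw
  have himg : Finset.univ.image (⇑ιA) = A := by
    ext y
    simp only [Finset.mem_image, Finset.mem_univ, true_and]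
    constructor
    · rintro ⟨x, rfl⟩; exact Finset.orderEmbOfFin_mem _ _ x
    · intro hy
      have : y ∈ Set.range ιA := (Finset.range_orderEmbOfFin A hAcard).symm ▸ hy
      exact this
  -- step 1 : restrict along ιA
  have nat1 : τ.app (op (SimplexCategory.mk (A.card - 1))) ((∂Δ[n+1] : SSet).map w.op u)
      = (basisSections 𝔅 B₀ Uo).map w.op (τ.app (op m.unop) u) :=
    ConcreteCategory.congr_hom (τ.naturality w.op) u
  have e1 : τ.app m u A hA =
      τ.app (op (SimplexCategory.mk (A.card - 1))) ((∂Δ[n+1] : SSet).map w.op u)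
        Finset.univ Finset.univ_nonempty := by
    rw [nat1]
    exact (O_congr (τ.app m u) himg).symm
  -- step 2 : factor through the image B
  have hBcard : B.card = B.card - 1 + 1 := (Nat.succ_pred_eq_of_pos hBne.card_pos).symm
  set ιB := B.orderEmbOfFin hBcard with hιB
  set iso := B.orderIsoOfFin hBcard with hiso
  have hmem : ∀ i : Fin (A.card - 1 + 1), f (ιA i) ∈ B := fun i =>
    Finset.mem_image_of_mem _ (Finset.orderEmbOfFin_mem _ _ i)
  set p0 : Fin (A.card - 1 + 1) → Fin (B.card - 1 + 1) :=
    fun i => iso.symm ⟨f (ιA i), hmem i⟩ with hp0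
  have pm : Monotone p0 := fun i j hij =>
    iso.symm.monotone (show (⟨f (ιA i), hmem i⟩ : B) ≤ ⟨f (ιA j), hmem j⟩ from
      f.monotone (ιA.monotone hij))
  set p : SimplexCategory.mk (A.card - 1) ⟶ SimplexCategory.mk (B.card - 1) :=
    SimplexCategory.Hom.mk ⟨p0, pm⟩ with hp
  have hcomm : ∀ i, ιB (p0 i) = f (ιA i) := by
    intro i
    have := congrArg (Subtype.val) (iso.apply_symm_apply ⟨f (ιA i), hmem i⟩)
    rw [Finset.coe_orderIsoOfFin_apply] at this
    exact this
  have heq : (∂Δ[n+1] : SSet).map w.op u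
      = (∂Δ[n+1] : SSet).map p.op (ιSimplex B hBne hBuniv) := by
    apply Subtype.ext
    show (Δ[n+1] : SSet).map w.op u.1 = (Δ[n+1] : SSet).map p.op (ιSimplex B hBne hBuniv).1
    apply stdSimplex.objEquiv.injective
    rw [stdSimplex.map_apply, stdSimplex.map_apply]
    simp only [Equiv.apply_symm_apply]
    apply SimplexCategory.Hom.ext
    apply OrderHom.ext
    funext i
    exact (hcomm i).symm
  have psurj : Function.Surjective p0 := by
    intro j
    have hbj : ιB j ∈ B := Finset.orderEmbOfFin_mem _ _ j
    have hbj' : ιB j ∈ Finset.image (⇑f) A := hbj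
    obtain ⟨a, haA, hfa⟩ := Finset.mem_image.mp hbj'
    have : a ∈ Set.range ιA := (Finset.range_orderEmbOfFin A hAcard).symm ▸ haA
    obtain ⟨i, hi⟩ := this
    refine ⟨i, ?_⟩
    have hsub : (⟨f (ιA i), hmem i⟩ : B) = iso j := by
      apply Subtype.ext
      rw [Finset.coe_orderIsoOfFin_apply]
      show f (ιA i) = ιB j
      rw [hi, hfa]
    show iso.symm ⟨f (ιA i), hmem i⟩ = j
    rw [hsub, OrderIso.symm_apply_apply]
  have himg2 : Finset.univ.image p0 = Finset.univ := by
    apply Finset.eq_univ_of_forall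
    intro j
    obtain ⟨i, hi⟩ := psurj j
    exact Finset.mem_image.mpr ⟨i, Finset.mem_univ i, hi⟩
  have nat2 : τ.app (op (SimplexCategory.mk (A.card - 1)))
        ((∂Δ[n+1] : SSet).map p.op (ιSimplex B hBne hBuniv))
      = (basisSections 𝔅 B₀ Uo).map p.op
          (τ.app (op (SimplexCategory.mk (B.card - 1))) (ιSimplex B hBne hBuniv)) :=
    ConcreteCategory.congr_hom (τ.naturality p.op) _
  rw [e1, heq, nat2]
  exact O_congr (τ.app (op (SimplexCategory.mk (B.card - 1))) (ιSimplex B hBne hBuniv)) himg2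


end Stmt11Aux

/-- if `𝔅` is a basis for the topology of `X`, `U ⊆ X` is open,
`B₀ ∈ 𝔅` and `B₀ ⊆ U`, then the simplicial set `T` is a trivial (contractible) Kan
complex: it is nonempty and every map `∂Δ^n → T` with `n ≥ 1` extends to `Δ^n`. -/
theorem stmt11 {X : Type} [TopologicalSpace X] (𝔅 : Set (Set X))
    (hB : TopologicalSpace.IsTopologicalBasis 𝔅) (Uo : Set X) (hUo : IsOpen Uo)
    (B₀ : Set X) (hB₀ : B₀ ∈ 𝔅) (hB₀U : B₀ ⊆ Uo) :
    Nonempty ((basisSections 𝔅 B₀ Uo).obj (op (SimplexCategory.mk 0))) ∧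
    ∀ (n : ℕ) (τ : (∂Δ[n + 1] : SSet) ⟶ basisSections 𝔅 B₀ Uo),
      ∃ g : Δ[n + 1] ⟶ basisSections 𝔅 B₀ Uo,
        ∂Δ[n + 1].ι ≫ g = τ := by
  constructor
  · exact ⟨fun A hA => ⟨B₀, hB₀, subset_rfl, hB₀U⟩⟩
  · intro n τ
    set b0 : { B : Set X // B ∈ 𝔅 ∧ B₀ ⊆ B ∧ B ⊆ Uo } := ⟨B₀, hB₀, subset_rfl, hB₀U⟩
      with hb0
    refine ⟨{ app := fun m => TypeCat.ofHom fun u A hA =>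
                Stmt11Aux.F τ b0 (A.image (SSet.stdSimplex.asOrderHom u)) (hA.image _),
              naturality := ?_ }, ?_⟩
    · intro a b w
      ext : 2
      funext u
      funext A hA
      refine O_congr (Stmt11Aux.F τ b0) ?_
      rw [Finset.image_image]
      rfl
    · apply NatTrans.ext
      funext m
      ext : 2
      funext u
      funext A hA
      exact (Stmt11Aux.key τ b0 u A hA).symm
end
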